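/- For integers k ≥ 1, 1 ≤ r ≤ k, and n ≥ 0: B_n^{(-k)} = Σ_{l=1}^{r} (-1)^{k-l} l! S(k,l) (l+1)^n + Σ_{m=1}^{k-r} (-1)^{k-m-r} binom(k,m) · r! · S(k-m, r) · Σ_{l=1}^{m} (-1)^{l+m} l! S(m,l) (l+r+1)^n. -/

import Mathlib

open Finset

/-- Stirling numbers of the second kind. -/
def S2 : ℕ → ℕ → ℕ
  | 0, 0 => 1
  | 0, _ + 1 => 0
  | _ + 1, 0 => 0
  | n + 1, k + 1 => S2 n k + (k + 1) * S2 n (k + 1)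

/-- Unsigned Stirling numbers of the first kind. -/
def S1 : ℕ → ℕ → ℕ
  | 0, 0 => 1
  | 0, _ + 1 => 0
  | _ + 1, 0 => 0
  | n + 1, k + 1 => S1 n k + n * S1 n (k + 1)

/-- Poly-Bernoulli number of negative index `B_n^{(-k)}` (closed power-sum formula). -/
def polyB (n k : ℕ) : ℤ :=
  ∑ l ∈ Finset.Icc 1 k, (-1 : ℤ) ^ (l + k) * (Nat.factorial l) * S2 k l * ((l : ℤ) + 1) ^ n

/-- Rising factorial `(r)_l = r (r+1) ⋯ (r+l-1)`. -/
def risingFact (r l : ℕ) : ℕ := ∏ i ∈ Finset.range l, (r + i)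

def fS (m j : ℕ) : ℕ := j.factorial * S2 m j

lemma S2_zero_right (m : ℕ) : S2 m 0 = if m = 0 then 1 else 0 := by
  cases m <;> rfl

lemma S2_zero_left (j : ℕ) : S2 0 j = if j = 0 then 1 else 0 := by
  cases j <;> rfl

lemma S2_eq_zero {m j : ℕ} (h : m < j) : S2 m j = 0 := by
  induction m generalizing j with
  | zero => cases j with
    | zero => omega
    | succ j => rfl
  | succ m ih =>
    cases j with
    | zero => omega
    | succ j =>
      rw [S2, ih (by omega), ih (by omega)]
      simp

lemma fS_succ_succ (p t : ℕ) : fS (p+1) (t+1) = (t+1) * (fS p t + fS p (t+1)) := by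
  simp only [fS, S2, Nat.factorial_succ]
  ring

lemma fS_zero_right (m : ℕ) : fS m 0 = if m = 0 then 1 else 0 := by
  simp [fS, S2_zero_right]

lemma fS_zero_left (j : ℕ) : fS 0 j = if j = 0 then 1 else 0 := by
  cases j <;> simp [fS, S2_zero_left, Nat.factorial]

lemma fS_eq_zero {m j : ℕ} (h : m < j) : fS m j = 0 := by
  simp [fS, S2_eq_zero h]

lemma conv (k j r : ℕ) :
    fS k (j + r) = ∑ m ∈ range (k+1), k.choose m * (fS m j * fS (k - m) r) := by
  induction k generalizing j r with
  | zero =>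
    cases j <;> cases r <;> simp [fS_zero_left]
  | succ k ih =>
    have hsplit : ∑ m ∈ range (k+2), (k+1).choose m * (fS m j * fS (k+1-m) r)
        = (∑ i ∈ range (k+1), k.choose i * (fS (i+1) j * fS (k-i) r))
          + ∑ m ∈ range (k+1), k.choose m * (fS m j * fS ((k-m)+1) r) := by
      rw [Finset.sum_range_succ' (fun m => (k+1).choose m * (fS m j * fS (k+1-m) r))]
      have h2 : ∑ m ∈ range (k+1), k.choose m * (fS m j * fS ((k-m)+1) r)
          = ∑ m ∈ range (k+2), k.choose m * (fS m j * fS (k+1-m) r) := by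
        conv_rhs => rw [Finset.sum_range_succ]
        rw [Nat.choose_succ_self]
        simp only [zero_mul, add_zero]
        apply Finset.sum_congr rfl
        intro m hm
        rw [Finset.mem_range] at hm
        have : k - m + 1 = k + 1 - m := by omega
        rw [this]
      rw [h2, Finset.sum_range_succ' (fun m => k.choose m * (fS m j * fS (k+1-m) r))]
      simp only [Nat.choose_succ_succ, Nat.choose_zero_right, Nat.succ_eq_add_one, add_mul]
      rw [Finset.sum_add_distrib, add_assoc]
      congr 1
      apply Finset.sum_congr rfl
      intro i hi
      rw [Finset.mem_range] at hi
      have : k + 1 - (i+1) = k - i := by omega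
      rw [this]
    rw [hsplit]
    cases j with
    | zero =>
      have hA : ∑ i ∈ range (k+1), k.choose i * (fS (i+1) 0 * fS (k-i) r) = 0 := by
        apply Finset.sum_eq_zero
        intro i _
        simp [fS_zero_right]
      have hB : ∑ m ∈ range (k+1), k.choose m * (fS m 0 * fS ((k-m)+1) r) = fS (k+1) r := by
        rw [Finset.sum_eq_single 0]
        · simp [fS_zero_right]
        · intro m _ hm
          simp [fS_zero_right, hm]
        · simp
      rw [hA, hB, zero_add, Nat.zero_add]
    | succ j' =>
      cases r with
      | zero =>
        have hB : ∑ m ∈ range (k+1), k.choose m * (fS m (j'+1) * fS ((k-m)+1) 0) = 0 := by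
          apply Finset.sum_eq_zero
          intro m _
          simp [fS_zero_right]
        have hA : ∑ i ∈ range (k+1), k.choose i * (fS (i+1) (j'+1) * fS (k-i) 0)
            = fS (k+1) (j'+1) := by
          rw [Finset.sum_eq_single k]
          · simp [fS_zero_right]
          · intro i hi hik
            rw [Finset.mem_range] at hi
            have : k - i ≠ 0 := by omega
            simp [fS_zero_right, this]
          · simp
        rw [hA, hB]; simp
      | succ r' =>
        have e1 : j' + 1 + (r' + 1) = (j' + 1 + r') + 1 := by omega
        rw [e1, fS_succ_succ]
        have hA : ∑ i ∈ range (k+1), k.choose i * (fS (i+1) (j'+1) * fS (k-i) (r'+1))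
            = (j'+1) * (fS k (j' + (r'+1)) + fS k ((j'+1) + (r'+1))) := by
          calc ∑ i ∈ range (k+1), k.choose i * (fS (i+1) (j'+1) * fS (k-i) (r'+1))
              = ∑ i ∈ range (k+1), (j'+1) * (k.choose i * (fS i j' * fS (k-i) (r'+1))
                  + k.choose i * (fS i (j'+1) * fS (k-i) (r'+1))) := by
                apply Finset.sum_congr rfl
                intro i _
                rw [fS_succ_succ]
                ring
            _ = (j'+1) * ((∑ i ∈ range (k+1), k.choose i * (fS i j' * fS (k-i) (r'+1)))
                  + ∑ i ∈ range (k+1), k.choose i * (fS i (j'+1) * fS (k-i) (r'+1))) := by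
                rw [← Finset.mul_sum, Finset.sum_add_distrib]
            _ = (j'+1) * (fS k (j' + (r'+1)) + fS k ((j'+1) + (r'+1))) := by
                rw [← ih j' (r'+1), ← ih (j'+1) (r'+1)]
        have hB : ∑ m ∈ range (k+1), k.choose m * (fS m (j'+1) * fS ((k-m)+1) (r'+1))
            = (r'+1) * (fS k ((j'+1) + r') + fS k ((j'+1) + (r'+1))) := by
          calc ∑ m ∈ range (k+1), k.choose m * (fS m (j'+1) * fS ((k-m)+1) (r'+1))
              = ∑ m ∈ range (k+1), (r'+1) * (k.choose m * (fS m (j'+1) * fS (k-m) r')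
                  + k.choose m * (fS m (j'+1) * fS (k-m) (r'+1))) := by
                apply Finset.sum_congr rfl
                intro m _
                rw [fS_succ_succ]
                ring
            _ = (r'+1) * ((∑ m ∈ range (k+1), k.choose m * (fS m (j'+1) * fS (k-m) r'))
                  + ∑ m ∈ range (k+1), k.choose m * (fS m (j'+1) * fS (k-m) (r'+1))) := by
                rw [← Finset.mul_sum, Finset.sum_add_distrib]
            _ = (r'+1) * (fS k ((j'+1) + r') + fS k ((j'+1) + (r'+1))) := by
                rw [← ih (j'+1) r', ← ih (j'+1) (r'+1)]
        rw [hA, hB]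
        have a1 : j' + (r' + 1) = j' + 1 + r' := by omega
        have a2 : j' + 1 + (r' + 1) = j' + 1 + r' + 1 := by omega
        rw [a1, a2]
        ring


lemma conv' (k j r : ℕ) (hrk : r ≤ k) :
    fS k (j + r) = ∑ m ∈ Icc j (k - r), k.choose m * (fS m j * fS (k - m) r) := by
  rw [conv]
  symm
  apply Finset.sum_subset
  · intro m hm
    rw [mem_Icc] at hm
    rw [mem_range]
    omega
  · intro m hm hnot
    rw [mem_range] at hm
    rw [mem_Icc] at hnot
    push_neg at hnot
    by_cases h : m < j
    · simp [fS_eq_zero h]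
    · have h2 : k - m < r := by omega
      simp [fS_eq_zero h2]

lemma negpow (a b : ℕ) (h : a % 2 = b % 2) : (-1:ℤ)^a = (-1:ℤ)^b := by
  rcases Nat.even_or_odd a with ha | ha
  · have hb : Even b := by
      rw [Nat.even_iff] at ha ⊢
      omega
    rw [ha.neg_one_pow, hb.neg_one_pow]
  · have hb : Odd b := by
      rw [Nat.odd_iff] at ha ⊢
      omega
    rw [ha.neg_one_pow, hb.neg_one_pow]


theorem stmt_15 (k r n : ℕ) (hk : 1 ≤ k) (hr1 : 1 ≤ r) (hrk : r ≤ k) :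
    polyB n k =
      (∑ l ∈ Finset.Icc 1 r,
          (-1 : ℤ) ^ (k - l) * (Nat.factorial l) * S2 k l * ((l : ℤ) + 1) ^ n) +
        ∑ m ∈ Finset.Icc 1 (k - r),
          (-1 : ℤ) ^ (k - m - r) * (Nat.choose k m) * (Nat.factorial r) * S2 (k - m) r *
            ∑ l ∈ Finset.Icc 1 m,
              (-1 : ℤ) ^ (l + m) * (Nat.factorial l) * S2 m l * ((l : ℤ) + (r : ℤ) + 1) ^ n := by
  have hstep1 : polyB n k
      = (∑ l ∈ Icc 1 r, (-1:ℤ)^(l+k) * l.factorial * S2 k l * ((l:ℤ)+1)^n)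
        + ∑ l ∈ Icc (r+1) k, (-1:ℤ)^(l+k) * l.factorial * S2 k l * ((l:ℤ)+1)^n := by
    have e1 : Icc 1 k = Ioc 0 k := by rw [← Finset.Icc_add_one_left_eq_Ioc, zero_add]
    have e2 : Icc 1 r = Ioc 0 r := by rw [← Finset.Icc_add_one_left_eq_Ioc, zero_add]
    have e3 : Icc (r+1) k = Ioc r k := by rw [← Finset.Icc_add_one_left_eq_Ioc]
    rw [polyB, e1, e2, e3]
    exact (Finset.sum_Ioc_consecutive
      (fun l => (-1:ℤ)^(l+k) * l.factorial * S2 k l * ((l:ℤ)+1)^n) (Nat.zero_le r) hrk).symm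
  rw [hstep1]
  congr 1
  · apply Finset.sum_congr rfl
    intro l hl
    rw [mem_Icc] at hl
    have he : l + k = (k - l) + 2 * l := by omega
    rw [he, pow_add, pow_mul, neg_one_sq, one_pow, mul_one]
  · -- second part
    have hre : Icc (r+1) k = (Icc 1 (k-r)).map (addLeftEmbedding r) := by
      rw [Finset.map_add_left_Icc]
      congr 1
      omega
    rw [hre, Finset.sum_map]
    have hpush : ∀ m : ℕ, (-1 : ℤ) ^ (k - m - r) * (Nat.choose k m) * (Nat.factorial r) * S2 (k - m) r *
            ∑ l ∈ Finset.Icc 1 m,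
              (-1 : ℤ) ^ (l + m) * (Nat.factorial l) * S2 m l * ((l : ℤ) + (r : ℤ) + 1) ^ n
          = ∑ l ∈ Finset.Icc 1 m,
              (-1 : ℤ) ^ (k - m - r) * (Nat.choose k m) * (Nat.factorial r) * S2 (k - m) r *
                ((-1 : ℤ) ^ (l + m) * (Nat.factorial l) * S2 m l * ((l : ℤ) + (r : ℤ) + 1) ^ n) :=
      fun m => Finset.mul_sum _ _ _
    rw [Finset.sum_congr rfl (fun m _ => hpush m)]
    rw [Finset.sum_comm' (t' := Icc 1 (k-r)) (s' := fun l => Icc l (k-r))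
      (by intro m l; simp only [mem_Icc]; omega)]
    apply Finset.sum_congr rfl
    intro l hl
    rw [mem_Icc] at hl
    have hterm : ∀ m ∈ Icc l (k-r),
        (-1 : ℤ) ^ (k - m - r) * (Nat.choose k m) * (Nat.factorial r) * S2 (k - m) r *
            ((-1 : ℤ) ^ (l + m) * (Nat.factorial l) * S2 m l * ((l : ℤ) + (r : ℤ) + 1) ^ n)
          = (-1:ℤ)^(k-r+l) * ((l:ℤ)+(r:ℤ)+1)^n * (k.choose m * (fS m l * fS (k-m) r) : ℕ) := by
      intro m hm
      rw [mem_Icc] at hm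
      have h1 : (-1 : ℤ) ^ (k - m - r) * (Nat.choose k m) * (Nat.factorial r) * S2 (k - m) r *
            ((-1 : ℤ) ^ (l + m) * (Nat.factorial l) * S2 m l * ((l : ℤ) + (r : ℤ) + 1) ^ n)
          = ((-1:ℤ)^(k-m-r) * (-1:ℤ)^(l+m)) * (((l:ℤ)+(r:ℤ)+1)^n *
              ((Nat.choose k m : ℤ) * (((Nat.factorial l : ℤ) * S2 m l) *
                ((Nat.factorial r : ℤ) * S2 (k-m) r)))) := by ring
      rw [h1, ← pow_add, negpow ((k-m-r)+(l+m)) (k-r+l) (by omega)]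
      simp only [fS]
      push_cast
      ring
    rw [Finset.sum_congr rfl hterm, ← Finset.mul_sum, ← Nat.cast_sum, ← conv' k l r hrk]
    have hg : addLeftEmbedding r l = r + l := rfl
    rw [hg]
    have hc : ((fS k (l + r) : ℕ) : ℤ) = ((r+l).factorial : ℤ) * S2 k (r+l) := by
      rw [fS, add_comm l r]
      push_cast
      ring
    rw [hc]
    have hs : (-1:ℤ)^(r+l+k) = (-1:ℤ)^(k-r+l) := negpow _ _ (by omega)
    rw [hs]
    push_cast
    ring
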